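/- Let G be a finite split graph and let I_s, I_t be independent sets of G with |I_s| = |I_t| ≥ 2. Let G′ be the graph obtained from G by adding one new vertex u adjacent to every vertex of G, and let k = |V(G′)| − |I_s| + 1. Let f_s be any proper k-coloring of G′ that assigns color 1 to every vertex of I_s and assigns pairwise distinct colors from {2,…,k} to the k−1 vertices of V(G′) ∖ I_s, and let f_t be any proper k-coloring of G′ defined analogously from I_t. Then I_s and I_t are reconfigurable under token sliding in G if and only if f_s and f_t are reconfigurable under color swapping in G′. -/

import Mathlib

/-- A proper `k`-coloring of `G`: a map `f : V → {1,…,k}` assigning different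
colors to adjacent vertices. -/
def IsProperColoring {V : Type*} (G : SimpleGraph V) (k : ℕ) (f : V → ℕ) : Prop :=
  (∀ v, f v ∈ Finset.Icc 1 k) ∧ ∀ ⦃u w : V⦄, G.Adj u w → f u ≠ f w

/-- Two colorings are adjacent under color swapping: there is an edge `uw` whose
endpoint colors are exchanged, all other vertices keep their color, and the two
colorings are distinct. -/
def CSAdj {V : Type*} (G : SimpleGraph V) (f f' : V → ℕ) : Prop :=
  f ≠ f' ∧ ∃ u w : V, G.Adj u w ∧ f u = f' w ∧ f w = f' u ∧
    ∀ x : V, x ≠ u → x ≠ w → f x = f' x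

/-- One step of the color-swapping reconfiguration between proper `k`-colorings. -/
def CSStep {V : Type*} (G : SimpleGraph V) (k : ℕ) (f f' : V → ℕ) : Prop :=
  IsProperColoring G k f ∧ IsProperColoring G k f' ∧ CSAdj G f f'

/-- Two proper `k`-colorings are reconfigurable under color swapping. -/
def CSReconf {V : Type*} (G : SimpleGraph V) (k : ℕ) : (V → ℕ) → (V → ℕ) → Prop :=
  Relation.ReflTransGen (CSStep G k)

/-- `I` is an independent set of `G` (as a finset). -/
def IsIndepFinset {V : Type*} (G : SimpleGraph V) (I : Finset V) : Prop :=
  ∀ u ∈ I, ∀ v ∈ I, ¬ G.Adj u v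

/-- Two independent sets are adjacent under token sliding: their symmetric
difference consists of exactly two vertices joined by an edge of `G`. -/
def TSAdj {V : Type*} [DecidableEq V] (G : SimpleGraph V) (I J : Finset V) : Prop :=
  (symmDiff I J).card = 2 ∧ ∃ u v : V, G.Adj u v ∧ symmDiff I J = {u, v}

/-- One step of token-sliding reconfiguration between independent sets. -/
def TSStep {V : Type*} [DecidableEq V] (G : SimpleGraph V) (I J : Finset V) : Prop :=
  IsIndepFinset G I ∧ IsIndepFinset G J ∧ TSAdj G I J

/-- Two independent sets are reconfigurable under token sliding. -/
def TSReconf {V : Type*} [DecidableEq V] (G : SimpleGraph V) :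
    Finset V → Finset V → Prop :=
  Relation.ReflTransGen (TSStep G)

/-- `G` is a split graph: its vertex set is partitioned into a clique and an
independent set. -/
def IsSplitGraph {V : Type*} (G : SimpleGraph V) : Prop :=
  ∃ K S : Set V, (∀ v, v ∈ K ∨ v ∈ S) ∧ Disjoint K S ∧
    G.IsClique K ∧ ∀ u ∈ S, ∀ v ∈ S, ¬ G.Adj u v

/-- The graph obtained from `G` by adding one new universal vertex (`none`). -/
def addUniversal {V : Type*} (G : SimpleGraph V) : SimpleGraph (Option V) :=
  SimpleGraph.fromRel (fun x y =>
    match x, y with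
    | some u, some v => G.Adj u v
    | none, some _ => True
    | _, _ => False)

section Aux
set_option linter.unusedSectionVars false
set_option linter.unusedVariables false

variable {V : Type*} [Fintype V] [DecidableEq V] {G : SimpleGraph V} {k m : ℕ}

/-- `x` is not a token position of `I`. -/
def NotTok (I : Finset V) (x : Option V) : Prop := ∀ v ∈ I, x ≠ some v

lemma notTok_none {I : Finset V} : NotTok I (none : Option V) := fun _ _ h => Option.some_ne_none _ h.symm

lemma notTok_some {I : Finset V} {w : V} : NotTok I (some w) ↔ w ∉ I := by
  constructor
  · intro h hw; exact h w hw rfl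
  · intro h v hv he
    rw [Option.some_inj] at he
    subst he
    exact h hv

/-- Canonical colorings associated to an independent set of size `m`. -/
structure Good (G : SimpleGraph V) (k m : ℕ) (I : Finset V) (f : Option V → ℕ) : Prop where
  indep : IsIndepFinset G I
  cardm : I.card = m
  tok : ∀ v ∈ I, f (some v) = 1
  rng : ∀ x, NotTok I x → f x ∈ Finset.Icc 2 k
  inj : ∀ x y, NotTok I x → NotTok I y → f x = f y → x = y

lemma addUniversal_adj_some_some {u v : V} :
    (addUniversal G).Adj (some u) (some v) ↔ G.Adj u v := by
  constructor
  · rintro ⟨hne, h | h⟩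
    · exact h
    · exact h.symm
  · intro h
    exact ⟨by simp [h.ne], Or.inl h⟩

lemma addUniversal_adj_none_some {v : V} :
    (addUniversal G).Adj (none : Option V) (some v) :=
  ⟨by simp, Or.inl trivial⟩

lemma Good.two_le_k {I : Finset V} {f : Option V → ℕ} (h : Good G k m I f) : 2 ≤ k := by
  have := h.rng none notTok_none
  rw [Finset.mem_Icc] at this
  omega

lemma Good.proper {I : Finset V} {f : Option V → ℕ} (h : Good G k m I f) :
    IsProperColoring (addUniversal G) k f := by
  have h2k : 2 ≤ k := h.two_le_k
  constructor
  · intro x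
    by_cases hx : NotTok I x
    · have := h.rng x hx
      rw [Finset.mem_Icc] at this ⊢
      omega
    · simp only [NotTok, not_forall] at hx
      obtain ⟨v, hv, hx⟩ := hx
      rw [not_not] at hx
      subst hx
      rw [h.tok v hv, Finset.mem_Icc]
      omega
  · intro x y hxy
    by_cases hx : NotTok I x <;> by_cases hy : NotTok I y
    · intro he; exact hxy.ne (h.inj x y hx hy he)
    · simp only [NotTok, not_forall, not_not] at hy
      obtain ⟨v, hv, rfl⟩ := hy
      have := h.rng x hx
      rw [Finset.mem_Icc] at this
      rw [h.tok v hv]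
      omega
    · simp only [NotTok, not_forall, not_not] at hx
      obtain ⟨v, hv, rfl⟩ := hx
      have := h.rng y hy
      rw [Finset.mem_Icc] at this
      rw [h.tok v hv]
      omega
    · simp only [NotTok, not_forall, not_not] at hx hy
      obtain ⟨v, hv, rfl⟩ := hx
      obtain ⟨w, hw, rfl⟩ := hy
      rw [addUniversal_adj_some_some] at hxy
      exact absurd hxy (h.indep v hv w hw)

/-- Swap two positions. -/
def swapFn {α : Type*} [DecidableEq α] (a b : α) : α → α :=
  fun x => if x = a then b else if x = b then a else x

lemma swapFn_left {α : Type*} [DecidableEq α] (a b : α) : swapFn a b a = b := by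
  simp [swapFn]

lemma swapFn_right {α : Type*} [DecidableEq α] (a b : α) : swapFn a b b = a := by
  unfold swapFn
  by_cases h : b = a <;> simp [h]

lemma swapFn_other {α : Type*} [DecidableEq α] {a b x : α} (hxa : x ≠ a) (hxb : x ≠ b) :
    swapFn a b x = x := by
  simp [swapFn, hxa, hxb]

lemma swapFn_invol {α : Type*} [DecidableEq α] (a b x : α) :
    swapFn a b (swapFn a b x) = x := by
  unfold swapFn
  by_cases hxa : x = a <;> by_cases hxb : x = b <;> by_cases hab : a = b <;> simp_all

lemma swapFn_injective {α : Type*} [DecidableEq α] (a b : α) :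
    Function.Injective (swapFn a b) := by
  intro x y h
  have := congrArg (swapFn a b) h
  rwa [swapFn_invol, swapFn_invol] at this

lemma swapFn_comm {α : Type*} [DecidableEq α] (a b : α) : swapFn a b = swapFn b a := by
  funext x
  unfold swapFn
  by_cases hxa : x = a <;> by_cases hxb : x = b <;> simp_all

lemma csadj_swap {W : Type*} [DecidableEq W] {H : SimpleGraph W} {f : W → ℕ} {a b : W}
    (hab : H.Adj a b) (hne : f a ≠ f b) : CSAdj H f (f ∘ swapFn a b) := by
  refine ⟨?_, a, b, hab, ?_, ?_, ?_⟩
  · intro h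
    have := congrFun h a
    simp only [Function.comp_apply, swapFn_left] at this
    exact hne this
  · simp [swapFn_right]
  · simp [swapFn_left]
  · intro x hxa hxb
    simp [swapFn_other hxa hxb]

/-- Transport of `Good` along an injection of positions. -/
lemma Good.comp {I J : Finset V} {f : Option V → ℕ} (h : Good G k m I f)
    (τ : Option V → Option V)
    (hJind : IsIndepFinset G J) (hJcard : J.card = m)
    (htok : ∀ v ∈ J, ∃ w ∈ I, τ (some v) = some w)
    (hnt : ∀ x, NotTok J x → NotTok I (τ x))
    (hinj : Function.Injective τ) :
    Good G k m J (f ∘ τ) := by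
  refine ⟨hJind, hJcard, ?_, ?_, ?_⟩
  · intro v hv
    obtain ⟨w, hw, he⟩ := htok v hv
    simp only [Function.comp_apply, he]
    exact h.tok w hw
  · intro x hx
    exact h.rng (τ x) (hnt x hx)
  · intro x y hx hy he
    exact hinj (h.inj (τ x) (τ y) (hnt x hx) (hnt y hy) he)

lemma good_mem_iff {I : Finset V} {f : Option V → ℕ} (h : Good G k m I f) (v : V) :
    v ∈ I ↔ f (some v) = 1 := by
  constructor
  · exact h.tok v
  · intro h1
    by_contra hv
    have := h.rng (some v) (notTok_some.mpr hv)
    rw [Finset.mem_Icc] at this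
    omega

/-- Good colorings are surjective onto `Icc 2 k` on non-token positions. -/
lemma Good.surj {I : Finset V} {f : Option V → ℕ} (h : Good G k m I f)
    (hm : m ≤ Fintype.card V) (hkk : k = Fintype.card V + 1 - m + 1)
    {c : ℕ} (hc : c ∈ Finset.Icc 2 k) : ∃ x, NotTok I x ∧ f x = c := by
  classical
  set A : Finset (Option V) := Finset.univ \ I.image some with hA
  have hmemA : ∀ x : Option V, x ∈ A ↔ NotTok I x := by
    intro x
    simp only [hA, Finset.mem_sdiff, Finset.mem_univ, true_and, Finset.mem_image, not_exists,
      not_and, NotTok]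
    constructor
    · intro hx v hv he; exact hx v hv he.symm
    · intro hx v hv he; exact hx v hv he.symm
  have hcardA : A.card = Fintype.card V + 1 - m := by
    rw [hA, Finset.card_sdiff_of_subset (Finset.subset_univ _),
      Finset.card_image_of_injective _ (Option.some_injective V)]
    simp [h.cardm]
  have hinjA : Set.InjOn f A := by
    intro x hx y hy he
    exact h.inj x y ((hmemA x).mp hx) ((hmemA y).mp hy) he
  have hsub : A.image f ⊆ Finset.Icc 2 k := by
    intro c hc
    rw [Finset.mem_image] at hc
    obtain ⟨x, hx, rfl⟩ := hc
    exact h.rng x ((hmemA x).mp hx)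
  have hcard : (Finset.Icc 2 k).card ≤ (A.image f).card := by
    rw [Finset.card_image_of_injOn hinjA, hcardA, Nat.card_Icc]
    omega
  have heq : A.image f = Finset.Icc 2 k := Finset.eq_of_subset_of_card_le hsub hcard
  rw [← heq, Finset.mem_image] at hc
  obtain ⟨x, hx, he⟩ := hc
  exact ⟨x, (hmemA x).mp hx, he⟩

/-- Core of the forward step: sliding the token `u → v`. -/
lemma forward_step_core {I J : Finset V} {f : Option V → ℕ} (hf : Good G k m I f)
    (hJ : IsIndepFinset G J) {u v : V} (huv : G.Adj u v)
    (huI : u ∈ I) (huJ : u ∉ J) (hvJ : v ∈ J) (hvI : v ∉ I)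
    (hmem : ∀ x, x ≠ u → x ≠ v → (x ∈ I ↔ x ∈ J)) :
    ∃ f', Good G k m J f' ∧ CSStep (addUniversal G) k f f' := by
  have huvne : u ≠ v := huv.ne
  set τ : Option V → Option V := swapFn (some u) (some v) with hτ
  have hgood : Good G k m J (f ∘ τ) := by
    refine hf.comp τ hJ ?_ ?_ ?_ (swapFn_injective _ _)
    · -- card
      have hJeq : J = insert v (I.erase u) := by
        ext x
        simp only [Finset.mem_insert, Finset.mem_erase]
        by_cases hxu : x = u
        · subst hxu
          simp only [huJ, false_iff, not_or]
          exact ⟨huvne, fun h => h.1 rfl⟩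
        · by_cases hxv : x = v
          · subst hxv; simp [hvJ]
          · simp [hxv, hxu, (hmem x hxu hxv).symm]
      rw [hJeq, Finset.card_insert_of_notMem (by simp [hvI]),
        Finset.card_erase_of_mem huI, hf.cardm]
      have : 1 ≤ I.card := Finset.card_pos.mpr ⟨u, huI⟩
      rw [hf.cardm] at this
      omega
    · -- tokens land on tokens
      intro w hw
      by_cases hwv : w = v
      · subst hwv
        exact ⟨u, huI, by rw [hτ, swapFn_right]⟩
      · have hwu : w ≠ u := fun h => huJ (h ▸ hw)
        refine ⟨w, (hmem w hwu hwv).mpr hw, ?_⟩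
        rw [hτ, swapFn_other (by simp [hwu]) (by simp [hwv])]
    · -- non-tokens land on non-tokens
      intro x hx
      by_cases hxu : x = some u
      · subst hxu
        rw [hτ, swapFn_left]
        exact notTok_some.mpr hvI
      · have hxv : x ≠ some v := fun h => (hx v hvJ h).elim
        rw [hτ, swapFn_other hxu hxv]
        intro w hw he
        by_cases hwu : w = u
        · exact hxu (by rw [he, hwu])
        · have hwv : w ≠ v := by
            intro h; subst h; exact hvI hw
          exact hx w ((hmem w hwu hwv).mp hw) he
  refine ⟨f ∘ τ, hgood, hf.proper, hgood.proper, ?_⟩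
  refine csadj_swap (addUniversal_adj_some_some.mpr huv) ?_
  have h1 : f (some u) = 1 := hf.tok u huI
  have h2 : f (some v) ∈ Finset.Icc 2 k := hf.rng _ (notTok_some.mpr hvI)
  rw [Finset.mem_Icc] at h2
  omega

lemma forward_step {I J : Finset V} {f : Option V → ℕ} (hf : Good G k m I f)
    (hstep : TSStep G I J) :
    ∃ f', Good G k m J f' ∧ CSStep (addUniversal G) k f f' := by
  obtain ⟨hI, hJ, hsd, u, v, huv, hset⟩ := hstep
  have hu : u ∈ symmDiff I J := by rw [hset]; simp
  have hv : v ∈ symmDiff I J := by rw [hset]; simp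
  rw [Finset.mem_symmDiff] at hu hv
  have hmem : ∀ x, x ≠ u → x ≠ v → (x ∈ I ↔ x ∈ J) := by
    intro x hxu hxv
    have : x ∉ symmDiff I J := by rw [hset]; simp [hxu, hxv]
    rw [Finset.mem_symmDiff] at this
    tauto
  rcases hu with ⟨huI, huJ⟩ | ⟨huJ, huI⟩
  · rcases hv with ⟨hvI, hvJ⟩ | ⟨hvJ, hvI⟩
    · exact absurd huv (hI u huI v hvI)
    · exact forward_step_core hf hJ huv huI huJ hvJ hvI hmem
  · rcases hv with ⟨hvI, hvJ⟩ | ⟨hvJ, hvI⟩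
    · refine forward_step_core hf hJ huv.symm hvI hvJ huJ huI ?_
      intro x hxv hxu
      exact hmem x hxu hxv
    · exact absurd huv (hJ u huJ v hvJ)

lemma good_swap_none {I : Finset V} {g : Option V → ℕ} (hg : Good G k m I g)
    {w : V} (hw : w ∉ I) :
    Good G k m I (g ∘ swapFn none (some w)) ∧
      CSStep (addUniversal G) k g (g ∘ swapFn none (some w)) := by
  have hne : g none ≠ g (some w) := by
    intro he
    exact Option.some_ne_none _ (hg.inj none (some w) notTok_none (notTok_some.mpr hw) he).symm
  have hgood : Good G k m I (g ∘ swapFn none (some w)) := by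
    refine hg.comp _ hg.indep hg.cardm ?_ ?_ (swapFn_injective _ _)
    · intro v hv
      refine ⟨v, hv, ?_⟩
      have hvw : v ≠ w := fun h => hw (h ▸ hv)
      rw [swapFn_other (by simp) (by simp [hvw])]
    · intro x hx
      by_cases hx0 : x = none
      · subst hx0
        rw [swapFn_left]
        exact notTok_some.mpr hw
      · by_cases hxw : x = some w
        · subst hxw
          rw [swapFn_right]
          exact notTok_none
        · rwa [swapFn_other hx0 hxw]
  exact ⟨hgood, hg.proper, hgood.proper, csadj_swap addUniversal_adj_none_some hne⟩

lemma perm_base {I : Finset V} {g h : Option V → ℕ}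
    (hm : m ≤ Fintype.card V) (hkk : k = Fintype.card V + 1 - m + 1)
    (hh : Good G k m I h) (hg : Good G k m I g)
    (hD : ∀ v : V, g (some v) = h (some v)) : g = h := by
  funext x
  cases x with
  | some v => exact hD v
  | none =>
    have hcn : h none ∈ Finset.Icc 2 k := hh.rng none notTok_none
    obtain ⟨x, hx, he⟩ := hg.surj hm hkk hcn
    cases x with
    | none => exact he
    | some w =>
      exfalso
      have h1 : h (some w) = h none := by rw [← hD w]; exact he
      exact Option.some_ne_none _ (hh.inj (some w) none hx notTok_none h1)

lemma perm {I : Finset V} {h : Option V → ℕ}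
    (hm : m ≤ Fintype.card V) (hkk : k = Fintype.card V + 1 - m + 1)
    (hh : Good G k m I h) :
    ∀ (n : ℕ) (g : Option V → ℕ), Good G k m I g →
      (Finset.univ.filter (fun v : V => g (some v) ≠ h (some v))).card ≤ n →
      CSReconf (addUniversal G) k g h := by
  intro n
  induction n with
  | zero =>
    intro g hg hD
    have hall : ∀ v : V, g (some v) = h (some v) := by
      intro v
      by_contra hv
      have hvD : v ∈ Finset.univ.filter (fun v : V => g (some v) ≠ h (some v)) := by
        simp [hv]
      have := Finset.card_pos.mpr ⟨v, hvD⟩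
      omega
    rw [perm_base hm hkk hh hg hall]
    exact Relation.ReflTransGen.refl
  | succ n ih =>
    intro g hg hD
    set D := Finset.univ.filter (fun v : V => g (some v) ≠ h (some v)) with hDdef
    by_cases hDe : ∀ v : V, g (some v) = h (some v)
    · rw [perm_base hm hkk hh hg hDe]
      exact Relation.ReflTransGen.refl
    push_neg at hDe
    obtain ⟨v, hv⟩ := hDe
    have hvD : v ∈ D := by simp [hDdef, hv]
    have hvI : v ∉ I := fun hmem => hv (by rw [hg.tok v hmem, hh.tok v hmem])
    have hc : h (some v) ∈ Finset.Icc 2 k := hh.rng _ (notTok_some.mpr hvI)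
    obtain ⟨p, hp, hpe⟩ := hg.surj hm hkk hc
    have hcardD : 1 ≤ D.card := Finset.card_pos.mpr ⟨v, hvD⟩
    cases p with
    | none =>
      obtain ⟨hg1, hstep⟩ := good_swap_none hg hvI
      set g1 := g ∘ swapFn none (some v) with hg1def
      have hfix : g1 (some v) = h (some v) := by
        rw [hg1def]
        simp only [Function.comp_apply, swapFn_right]
        exact hpe
      have hsub : Finset.univ.filter (fun w : V => g1 (some w) ≠ h (some w)) ⊆ D.erase v := by
        intro w hw
        rw [Finset.mem_filter] at hw
        have hwv : w ≠ v := by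
          intro hwv; subst hwv; exact hw.2 hfix
        have hval : g1 (some w) = g (some w) := by
          rw [hg1def]
          simp only [Function.comp_apply]
          rw [swapFn_other (by simp) (by simp [hwv])]
        rw [Finset.mem_erase]
        refine ⟨hwv, ?_⟩
        simp only [hDdef, Finset.mem_filter, Finset.mem_univ, true_and]
        rw [← hval]
        exact hw.2
      have hcard1 : (Finset.univ.filter (fun w : V => g1 (some w) ≠ h (some w))).card ≤ n := by
        have := Finset.card_le_card hsub
        rw [Finset.card_erase_of_mem hvD] at this
        omega
      exact Relation.ReflTransGen.head hstep (ih g1 hg1 hcard1)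
    | some w =>
      have hwI : w ∉ I := notTok_some.mp hp
      have hwv : w ≠ v := by
        intro he; subst he; exact hv hpe
      have hwD : w ∈ D := by
        simp only [hDdef, Finset.mem_filter, Finset.mem_univ, true_and]
        intro he
        have : h (some w) = h (some v) := by rw [← he]; exact hpe
        have := hh.inj (some w) (some v) (notTok_some.mpr hwI) (notTok_some.mpr hvI) this
        rw [Option.some_inj] at this
        exact hwv this
      obtain ⟨hg1, hstep1⟩ := good_swap_none hg hwI
      set g1 := g ∘ swapFn none (some w) with hg1def
      obtain ⟨hg2, hstep2⟩ := good_swap_none hg1 hvI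
      set g2 := g1 ∘ swapFn none (some v) with hg2def
      have hg1none : g1 none = h (some v) := by
        rw [hg1def]
        simp only [Function.comp_apply, swapFn_left]
        exact hpe
      have hfix : g2 (some v) = h (some v) := by
        rw [hg2def]
        simp only [Function.comp_apply, swapFn_right]
        exact hg1none
      have hsub : Finset.univ.filter (fun u : V => g2 (some u) ≠ h (some u)) ⊆ D.erase v := by
        intro u hu
        rw [Finset.mem_filter] at hu
        have huv : u ≠ v := by
          intro he; subst he; exact hu.2 hfix
        rw [Finset.mem_erase]
        refine ⟨huv, ?_⟩
        by_cases huw : u = w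
        · subst huw; exact hwD
        · have hval : g2 (some u) = g (some u) := by
            have e1 : swapFn none (some v) (some u) = some u :=
              swapFn_other (by simp) (by simp [huv])
            have e2 : swapFn (none : Option V) (some w) (some u) = some u :=
              swapFn_other (by simp) (by simp [huw])
            rw [hg2def, hg1def]
            simp only [Function.comp_apply, e1, e2]
          simp only [hDdef, Finset.mem_filter, Finset.mem_univ, true_and]
          rw [← hval]
          exact hu.2
      have hcard1 : (Finset.univ.filter (fun u : V => g2 (some u) ≠ h (some u))).card ≤ n := by
        have := Finset.card_le_card hsub
        rw [Finset.card_erase_of_mem hvD] at this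
        omega
      exact Relation.ReflTransGen.head hstep1
        (Relation.ReflTransGen.head hstep2 (ih g2 hg2 hcard1))

lemma ones_indep {f : Option V → ℕ} (hf : IsProperColoring (addUniversal G) k f)
    {J : Finset V} (h1 : ∀ v ∈ J, f (some v) = 1) : IsIndepFinset G J :=
  fun u hu v hv hadj =>
    (hf.2 (addUniversal_adj_some_some.mpr hadj)) (by rw [h1 u hu, h1 v hv])

/-- Backward core: a color swap moving color 1 from `a` to `b` is a token slide. -/
lemma backward_slide {I : Finset V} {f f' : Option V → ℕ} (hm2 : 2 ≤ m)
    (hf : Good G k m I f) (hf' : IsProperColoring (addUniversal G) k f')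
    {a b : Option V} (hab : (addUniversal G).Adj a b) (ha1 : f a = 1)
    (hfeq : ∀ x, f' x = f (swapFn a b x)) :
    ∃ J, Good G k m J f' ∧ TSStep G I J := by
  have hfab : f a ≠ f b := hf.proper.2 hab
  obtain ⟨u, rfl⟩ : ∃ u, a = some u := by
    cases a with
    | none =>
      exfalso
      have := hf.rng none notTok_none
      rw [Finset.mem_Icc] at this
      omega
    | some u => exact ⟨u, rfl⟩
  have huI : u ∈ I := (good_mem_iff hf u).mpr ha1
  have hb1 : f b ≠ 1 := fun h => hfab (ha1.trans h.symm)
  obtain ⟨w, rfl⟩ : ∃ w, b = some w := by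
    cases b with
    | none =>
      exfalso
      have hf'n : f' none = 1 := by
        rw [hfeq none, swapFn_right, ha1]
      have hlt : 1 < I.card := by
        rw [hf.cardm]; omega
      obtain ⟨v, hvI, hvu⟩ := Finset.exists_mem_ne hlt u
      have hf'v : f' (some v) = 1 := by
        rw [hfeq (some v), swapFn_other (by simp [hvu]) (by simp)]
        exact hf.tok v hvI
      exact hf'.2 (addUniversal_adj_none_some (v := v)) (hf'n.trans hf'v.symm)
    | some w => exact ⟨w, rfl⟩
  have hwI : w ∉ I := fun h => hb1 (hf.tok w h)
  have huw : u ≠ w := fun h => hwI (h ▸ huI)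
  have hG : G.Adj u w := addUniversal_adj_some_some.mp hab
  set J : Finset V := insert w (I.erase u) with hJdef
  have huJ : u ∉ J := by simp [hJdef, huw]
  have hwJ : w ∈ J := by simp [hJdef]
  have hmemJ : ∀ x, x ≠ u → x ≠ w → (x ∈ J ↔ x ∈ I) := by
    intro x hxu hxw
    simp [hJdef, hxu, hxw]
  have htokJ : ∀ v ∈ J, f' (some v) = 1 := by
    intro v hv
    by_cases hvw : v = w
    · subst hvw
      rw [hfeq (some v), swapFn_right]
      exact ha1
    · have hvu : v ≠ u := by
        intro h; subst h; exact huJ hv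
      rw [hfeq (some v), swapFn_other (by simp [hvu]) (by simp [hvw])]
      exact hf.tok v ((hmemJ v hvu hvw).mp hv)
  have hJind : IsIndepFinset G J := ones_indep hf' htokJ
  have hJcard : J.card = m := by
    rw [hJdef, Finset.card_insert_of_notMem (by simp [hwI]),
      Finset.card_erase_of_mem huI, hf.cardm]
    omega
  have hf'comp : f' = f ∘ swapFn (some u) (some w) := funext hfeq
  have hGood : Good G k m J f' := by
    rw [hf'comp]
    refine hf.comp _ hJind hJcard ?_ ?_ (swapFn_injective _ _)
    · intro v hv
      by_cases hvw : v = w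
      · subst hvw
        exact ⟨u, huI, swapFn_right _ _⟩
      · have hvu : v ≠ u := by
          intro h; subst h; exact huJ hv
        exact ⟨v, (hmemJ v hvu hvw).mp hv,
          swapFn_other (by simp [hvu]) (by simp [hvw])⟩
    · intro x hx
      by_cases hxa : x = some u
      · subst hxa
        rw [swapFn_left]
        exact notTok_some.mpr hwI
      · have hxb : x ≠ some w := fun h => (hx w hwJ h).elim
        rw [swapFn_other hxa hxb]
        intro v hv he
        by_cases hvu : v = u
        · exact hxa (by rw [he, hvu])
        · have hvw : v ≠ w := fun h => hwI (h ▸ hv)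
          exact hx v ((hmemJ v hvu hvw).mpr hv) he
  refine ⟨J, hGood, hf.indep, hJind, ?_, u, w, hG, ?_⟩
  · have hsd : symmDiff I J = {u, w} := by
      ext x
      rw [Finset.mem_symmDiff]
      simp only [Finset.mem_insert, Finset.mem_singleton]
      by_cases hxu : x = u
      · subst hxu; simp [huI, huJ]
      · by_cases hxw : x = w
        · subst hxw; simp [hwI, hwJ]
        · simp only [hxu, hxw, or_self, iff_false]
          rw [hmemJ x hxu hxw]
          tauto
    rw [hsd]
    exact Finset.card_pair huw
  · ext x
    rw [Finset.mem_symmDiff]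
    simp only [Finset.mem_insert, Finset.mem_singleton]
    by_cases hxu : x = u
    · subst hxu; simp [huI, huJ]
    · by_cases hxw : x = w
      · subst hxw; simp [hwI, hwJ]
      · simp only [hxu, hxw, or_self, iff_false]
        rw [hmemJ x hxu hxw]
        tauto

lemma backward_step {I : Finset V} {f f' : Option V → ℕ} (hm2 : 2 ≤ m)
    (hf : Good G k m I f) (hstep : CSStep (addUniversal G) k f f') :
    ∃ J, Good G k m J f' ∧ TSReconf G I J := by
  obtain ⟨hp, hp', hne, a, b, hab, h1, h2, hoth⟩ := hstep
  have hfeq : ∀ x, f' x = f (swapFn a b x) := by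
    intro x
    by_cases hxa : x = a
    · subst hxa; rw [swapFn_left]; exact h2.symm
    · by_cases hxb : x = b
      · subst hxb; rw [swapFn_right]; exact h1.symm
      · rw [swapFn_other hxa hxb]; exact (hoth x hxa hxb).symm
  by_cases ha1 : f a = 1
  · obtain ⟨J, hJ, hTS⟩ := backward_slide hm2 hf hp' hab ha1 hfeq
    exact ⟨J, hJ, Relation.ReflTransGen.single hTS⟩
  by_cases hb1 : f b = 1
  · have hfeq' : ∀ x, f' x = f (swapFn b a x) := by
      intro x; rw [swapFn_comm]; exact hfeq x
    obtain ⟨J, hJ, hTS⟩ := backward_slide hm2 hf hp' hab.symm hb1 hfeq'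
    exact ⟨J, hJ, Relation.ReflTransGen.single hTS⟩
  · refine ⟨I, ?_, Relation.ReflTransGen.refl⟩
    have hfc : f' = f ∘ swapFn a b := funext hfeq
    rw [hfc]
    refine hf.comp _ hf.indep hf.cardm ?_ ?_ (swapFn_injective _ _)
    · intro v hv
      have hva : some v ≠ a := fun h => ha1 (by rw [← h]; exact hf.tok v hv)
      have hvb : some v ≠ b := fun h => hb1 (by rw [← h]; exact hf.tok v hv)
      exact ⟨v, hv, swapFn_other hva hvb⟩
    · intro x hx
      have hnta : NotTok I a := fun v hv he => ha1 (by rw [he]; exact hf.tok v hv)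
      have hntb : NotTok I b := fun v hv he => hb1 (by rw [he]; exact hf.tok v hv)
      by_cases hxa : x = a
      · subst hxa; rw [swapFn_left]; exact hntb
      · by_cases hxb : x = b
        · subst hxb; rw [swapFn_right]; exact hnta
        · rwa [swapFn_other hxa hxb]

end Aux

/-- reduction from Token Sliding on split graphs to CRCS. -/
theorem stmt_2 {V : Type*} [Fintype V] [DecidableEq V] (G : SimpleGraph V)
    (hsplit : IsSplitGraph G) (Is It : Finset V)
    (hIs : IsIndepFinset G Is) (hIt : IsIndepFinset G It)
    (hcard : Is.card = It.card) (h2 : 2 ≤ Is.card)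
    (k : ℕ) (hk : k = Fintype.card (Option V) - Is.card + 1)
    (fs ft : Option V → ℕ)
    (hfs : IsProperColoring (addUniversal G) k fs)
    (hft : IsProperColoring (addUniversal G) k ft)
    (hfs1 : ∀ v ∈ Is, fs (some v) = 1)
    (hfs2 : ∀ x : Option V, (∀ v ∈ Is, x ≠ some v) → fs x ∈ Finset.Icc 2 k)
    (hfs3 : ∀ x y : Option V, (∀ v ∈ Is, x ≠ some v) → (∀ v ∈ Is, y ≠ some v) →
      fs x = fs y → x = y)
    (hft1 : ∀ v ∈ It, ft (some v) = 1)
    (hft2 : ∀ x : Option V, (∀ v ∈ It, x ≠ some v) → ft x ∈ Finset.Icc 2 k)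
    (hft3 : ∀ x y : Option V, (∀ v ∈ It, x ≠ some v) → (∀ v ∈ It, y ≠ some v) →
      ft x = ft y → x = y) :
    TSReconf G Is It ↔ CSReconf (addUniversal G) k fs ft := by
  have hm : Is.card ≤ Fintype.card V := Finset.card_le_univ Is
  have hkk : k = Fintype.card V + 1 - Is.card + 1 := by
    rw [hk, Fintype.card_option]
  have hGs : Good G k Is.card Is fs := ⟨hIs, rfl, hfs1, hfs2, hfs3⟩
  have hGt : Good G k Is.card It ft := ⟨hIt, hcard.symm, hft1, hft2, hft3⟩
  constructor
  · intro hTS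
    have key : ∀ J, TSReconf G Is J →
        ∃ g, Good G k Is.card J g ∧ CSReconf (addUniversal G) k fs g := by
      intro J hJ
      induction hJ with
      | refl => exact ⟨fs, hGs, Relation.ReflTransGen.refl⟩
      | tail hsteps hstep ih =>
        obtain ⟨g, hg, hcs⟩ := ih
        obtain ⟨g', hg', hstep'⟩ := forward_step hg hstep
        exact ⟨g', hg', hcs.tail hstep'⟩
    obtain ⟨g, hg, hcs⟩ := key It hTS
    exact hcs.trans (perm hm hkk hGt _ g hg le_rfl)
  · intro hCS
    have key : ∀ g, CSReconf (addUniversal G) k fs g →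
        ∃ J, Good G k Is.card J g ∧ TSReconf G Is J := by
      intro g hg
      induction hg with
      | refl => exact ⟨Is, hGs, Relation.ReflTransGen.refl⟩
      | tail hsteps hstep ih =>
        obtain ⟨J, hJ, hts⟩ := ih
        obtain ⟨J', hJ', hts'⟩ := backward_step h2 hJ hstep
        exact ⟨J', hJ', hts.trans hts'⟩
    obtain ⟨J, hJ, hts⟩ := key ft hCS
    have hJIt : J = It := by
      ext v
      rw [good_mem_iff hJ v, good_mem_iff hGt v]
    rwa [hJIt] at hts
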